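/- Let 𝓕 be a finite nonempty family of nonempty subsets of [r]. Then Δ_𝓕 equals the set of all vectors x ∈ ℝ^r with x_i ≥ 0 for all i, Σ_{i=1}^r x_i = |𝓕|, and Σ_{i∈G} x_i ≥ |{F ∈ 𝓕 : F ⊆ G}| for every subset G ⊆ [r]. -/

import Mathlib

open Finset Pointwise

/-- The 0/1 indicator vector (in `ℝ^n`) of a finite set of coordinates. -/
def indVec {n : ℕ} (S : Finset (Fin n)) : Fin n → ℝ := fun i => if i ∈ S then 1 else 0

/-- Independence with respect to a family `𝔅` of bases: being contained in a basis. -/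
def FamIndep {n : ℕ} (𝔅 : Finset (Finset (Fin n))) (I : Finset (Fin n)) : Prop :=
  ∃ B ∈ 𝔅, I ⊆ B

/-- Circuits of the family `𝔅`: minimal dependent sets. -/
def FamCircuit {n : ℕ} (𝔅 : Finset (Finset (Fin n))) (C : Finset (Fin n)) : Prop :=
  ¬ FamIndep 𝔅 C ∧ ∀ D ⊂ C, FamIndep 𝔅 D

open scoped Classical in
/-- The rank of a set: maximal cardinality of an independent subset. -/
noncomputable def famRk {n : ℕ} (𝔅 : Finset (Finset (Fin n))) (F : Finset (Fin n)) : ℕ :=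
  (F.powerset.filter (fun I => FamIndep 𝔅 I)).sup Finset.card

open scoped Classical in
/-- The bases of the restriction to `F`: the maximal independent subsets of `F`. -/
noncomputable def famRestrictBases {n : ℕ} (𝔅 : Finset (Finset (Fin n)))
    (F : Finset (Fin n)) : Finset (Finset (Fin n)) :=
  F.powerset.filter fun B =>
    FamIndep 𝔅 B ∧ ∀ B' ⊆ F, FamIndep 𝔅 B' → B ⊆ B' → B = B'

open scoped Classical in
/-- The bases of the contraction by `F`: the sets `B \ F` where `B` is a basis meeting `F`
in a set of full rank `rk F`. -/
noncomputable def famContractBases {n : ℕ} (𝔅 : Finset (Finset (Fin n)))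
    (F : Finset (Fin n)) : Finset (Finset (Fin n)) :=
  (𝔅.filter fun B => (B ∩ F).card = famRk 𝔅 F).image (· \ F)

/-- `i` and `j` are related if equal or contained in a common circuit. -/
def FamConnRel {n : ℕ} (𝔅 : Finset (Finset (Fin n))) (i j : Fin n) : Prop :=
  i = j ∨ ∃ C, FamCircuit 𝔅 C ∧ i ∈ C ∧ j ∈ C

/-- Number of connected components: number of classes of the equivalence relation
generated by `FamConnRel`. -/
noncomputable def famNumComponents {n : ℕ} (𝔅 : Finset (Finset (Fin n))) : ℕ :=
  Nat.card (Quot (FamConnRel 𝔅))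

/-- Connectedness of the matroid presented by bases `𝔅` on the ground set `E`:
any two distinct elements of `E` lie in a common circuit (within `E`). -/
def FamConnectedOn {n : ℕ} (𝔅 : Finset (Finset (Fin n))) (E : Finset (Fin n)) : Prop :=
  ∀ i ∈ E, ∀ j ∈ E, i ≠ j → ∃ C, C ⊆ E ∧ FamCircuit 𝔅 C ∧ i ∈ C ∧ j ∈ C

/-- A matroid of rank `r` on the ground set `Fin n`, given by its collection of bases:
`r`-element sets satisfying the basis exchange axiom. -/
structure FinMatroid (n r : ℕ) where
  bases : Finset (Finset (Fin n))
  bases_nonempty : bases.Nonempty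
  card_bases : ∀ B ∈ bases, B.card = r
  exchange : ∀ B₁ ∈ bases, ∀ B₂ ∈ bases, ∀ i ∈ B₁ \ B₂,
      ∃ j ∈ B₂ \ B₁, insert j (B₁.erase i) ∈ bases

namespace FinMatroid

variable {n r : ℕ}

def Indep (M : FinMatroid n r) (I : Finset (Fin n)) : Prop := FamIndep M.bases I

def IsCircuit (M : FinMatroid n r) (C : Finset (Fin n)) : Prop := FamCircuit M.bases C

noncomputable def rk (M : FinMatroid n r) (F : Finset (Fin n)) : ℕ := famRk M.bases F

/-- A flat: no circuit leaves exactly one element outside `F`. -/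
def IsFlat (M : FinMatroid n r) (F : Finset (Fin n)) : Prop :=
  ∀ C, M.IsCircuit C → (C \ F).card ≠ 1

open scoped Classical in
/-- Closure of a set: the intersection of all flats containing it (the smallest flat
containing it). -/
noncomputable def closure (M : FinMatroid n r) (S : Finset (Fin n)) : Finset (Fin n) :=
  Finset.univ.filter fun i => ∀ F, M.IsFlat F → S ⊆ F → i ∈ F

/-- No single element is dependent. -/
def Loopless (M : FinMatroid n r) : Prop := ∀ i : Fin n, M.Indep {i}

noncomputable def numComponents (M : FinMatroid n r) : ℕ := famNumComponents M.bases

/-- Any two distinct elements lie in a common circuit. -/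
def Connected (M : FinMatroid n r) : Prop :=
  ∀ i j : Fin n, i ≠ j → ∃ C, M.IsCircuit C ∧ i ∈ C ∧ j ∈ C

/-- `B` is a `w`-maximal basis of `M`. -/
def IsMaxBasis (M : FinMatroid n r) (w : Fin n → ℝ) (B : Finset (Fin n)) : Prop :=
  B ∈ M.bases ∧ ∀ B' ∈ M.bases, ∑ i ∈ B', w i ≤ ∑ i ∈ B, w i

open scoped Classical in
/-- The bases of the matroid `M_w`: the `w`-maximal bases of `M`. -/
noncomputable def maxBases (M : FinMatroid n r) (w : Fin n → ℝ) :
    Finset (Finset (Fin n)) :=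
  M.bases.filter fun B => ∀ B' ∈ M.bases, ∑ i ∈ B', w i ≤ ∑ i ∈ B, w i

/-- Membership in the Bergman fan: on every circuit the minimum of `w` is attained
at least twice. -/
def InBergmanFan (M : FinMatroid n r) (w : Fin n → ℝ) : Prop :=
  ∀ C, M.IsCircuit C → ∃ i ∈ C, ∃ j ∈ C, i ≠ j ∧ w i = w j ∧ ∀ k ∈ C, w i ≤ w k

/-- The matroid polytope: convex hull of the indicator vectors of the bases. -/
noncomputable def polytope (M : FinMatroid n r) : Set (Fin n → ℝ) :=
  convexHull ℝ (indVec '' ↑M.bases)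

noncomputable def restrictBases (M : FinMatroid n r) (F : Finset (Fin n)) :
    Finset (Finset (Fin n)) :=
  famRestrictBases M.bases F

noncomputable def contractBases (M : FinMatroid n r) (F : Finset (Fin n)) :
    Finset (Finset (Fin n)) :=
  famContractBases M.bases F

/-- `𝓖` is a building set in the lattice of flats of `M` (with bottom element `∅` and
join = closure of union): for every nonempty flat `X`, the join map is an order
isomorphism from the product of the lower intervals of the maximal elements of
`𝓖` below `X` onto the lower interval of `X`. -/
def IsFlatBuilding (M : FinMatroid n r) (𝓖 : Set (Finset (Fin n))) : Prop :=
  (∀ F ∈ 𝓖, M.IsFlat F ∧ F ≠ ∅) ∧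
  ∀ X, M.IsFlat X → X ≠ ∅ →
    ∃ (k : ℕ) (g : Fin k → Finset (Fin n)),
      Function.Injective g ∧
      (∀ i, g i ∈ 𝓖 ∧ g i ⊆ X) ∧
      (∀ i, ∀ H ∈ 𝓖, H ⊆ X → g i ⊆ H → g i = H) ∧
      (∀ H ∈ 𝓖, H ⊆ X → ∃ i, H ⊆ g i) ∧
      ∃ e : (∀ i : Fin k, {F : Finset (Fin n) // M.IsFlat F ∧ F ⊆ g i}) ≃o
              {F : Finset (Fin n) // M.IsFlat F ∧ F ⊆ X},
        ∀ y, (e y).1 = M.closure (Finset.univ.sup fun i => (y i).1)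

/-- `S` is nested with respect to `𝓖` (in the lattice of flats of `M`): `S ⊆ 𝓖` and for
every subcollection of at least two pairwise incomparable members, their join (the
closure of their union) is not in `𝓖`. -/
def IsNested (M : FinMatroid n r) (𝓖 : Set (Finset (Fin n)))
    (S : Finset (Finset (Fin n))) : Prop :=
  ↑S ⊆ 𝓖 ∧ ∀ T ⊆ S, 2 ≤ T.card →
    (∀ A ∈ T, ∀ B ∈ T, A ≠ B → ¬ A ⊆ B ∧ ¬ B ⊆ A) →
    M.closure (T.sup id) ∉ 𝓖

end FinMatroid

/-- A building set in the Boolean lattice of subsets of `Fin r`: for every nonempty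
`X ⊆ [r]`, the union map is an order isomorphism from the product of the lower
intervals of the maximal elements of `𝓕` below `X` onto the lower interval of `X`. -/
def BoolBuilding {r : ℕ} (𝓕 : Set (Finset (Fin r))) : Prop :=
  (∀ F ∈ 𝓕, F ≠ ∅) ∧
  ∀ X : Finset (Fin r), X ≠ ∅ →
    ∃ (k : ℕ) (g : Fin k → Finset (Fin r)),
      Function.Injective g ∧
      (∀ i, g i ∈ 𝓕 ∧ g i ⊆ X) ∧
      (∀ i, ∀ H ∈ 𝓕, H ⊆ X → g i ⊆ H → g i = H) ∧
      (∀ H ∈ 𝓕, H ⊆ X → ∃ i, H ⊆ g i) ∧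
      ∃ e : (∀ i : Fin k, {F : Finset (Fin r) // F ⊆ g i}) ≃o
              {F : Finset (Fin r) // F ⊆ X},
        ∀ y, (e y).1 = Finset.univ.sup fun i => (y i).1

/-- `S` is nested with respect to `𝓕` in the Boolean lattice: for every subcollection
of at least two pairwise incomparable members, their union is not in `𝓕`. -/
def BoolNested {r : ℕ} (𝓕 : Set (Finset (Fin r))) (S : Finset (Finset (Fin r))) : Prop :=
  ↑S ⊆ 𝓕 ∧ ∀ T ⊆ S, 2 ≤ T.card →
    (∀ A ∈ T, ∀ B ∈ T, A ≠ B → ¬ A ⊆ B ∧ ¬ B ⊆ A) →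
    T.sup id ∉ 𝓕

/-- The simplex `Δ_F = conv{e_i : i ∈ F}`. -/
noncomputable def faceSimplex {r : ℕ} (F : Finset (Fin r)) : Set (Fin r → ℝ) :=
  convexHull ℝ ((fun i => (Pi.single i 1 : Fin r → ℝ)) '' ↑F)

/-- The Minkowski sum `Δ_𝓕 = Σ_{F ∈ 𝓕} Δ_F`. -/
noncomputable def minkSum {r : ℕ} (𝓕 : Finset (Finset (Fin r))) : Set (Fin r → ℝ) :=
  ∑ F ∈ 𝓕, faceSimplex F
section Statement9Aux

variable {r : ℕ}

/-- Max of `w` over a finset, `0` if empty. -/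
noncomputable def mxAux (w : Fin r → ℝ) (F : Finset (Fin r)) : ℝ :=
  if h : F.Nonempty then F.sup' h w else 0

lemma mxAux_of_nonempty {w : Fin r → ℝ} {F : Finset (Fin r)} (h : F.Nonempty) :
    mxAux w F = F.sup' h w := dif_pos h

lemma faceSimplex_mem_props {F : Finset (Fin r)} {z : Fin r → ℝ}
    (hz : z ∈ faceSimplex F) :
    (∀ i, 0 ≤ z i) ∧ (∀ i ∉ F, z i = 0) ∧ ∑ i ∈ F, z i = 1 := by
  have hconv : Convex ℝ {y : Fin r → ℝ |
      (∀ i, 0 ≤ y i) ∧ (∀ i ∉ F, y i = 0) ∧ ∑ i ∈ F, y i = 1} := by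
    rintro y1 ⟨h1, h2, h3⟩ y2 ⟨g1, g2, g3⟩ a b ha hb hab
    refine ⟨fun i => ?_, fun i hi => ?_, ?_⟩
    · have := h1 i; have := g1 i
      simp only [Pi.add_apply, Pi.smul_apply, smul_eq_mul]
      nlinarith
    · simp only [Pi.add_apply, Pi.smul_apply, smul_eq_mul, h2 i hi, g2 i hi]
      ring
    · simp only [Pi.add_apply, Pi.smul_apply, smul_eq_mul, Finset.sum_add_distrib,
        ← Finset.mul_sum, h3, g3]
      linarith
  refine convexHull_min ?_ hconv hz
  rintro y ⟨i, hi, rfl⟩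
  have hiF : i ∈ F := hi
  refine ⟨fun j => ?_, fun j hj => ?_, ?_⟩
  · simp only [Pi.single_apply]
    split <;> norm_num
  · simp only [Pi.single_apply, ite_eq_right_iff]
    intro hji
    exact absurd (show j ∈ F by rw [hji]; exact hiF) hj
  · simp only [Pi.single_apply]
    rw [Finset.sum_ite_eq' F i (fun _ => (1 : ℝ)), if_pos hiF]

open scoped Classical in
lemma key_nonneg (𝓕 : Finset (Finset (Fin r))) (h : ∀ F ∈ 𝓕, F ≠ ∅)
    (x : Fin r → ℝ) (hxs : ∑ i, x i = (𝓕.card : ℝ))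
    (hxG : ∀ G : Finset (Fin r),
      ((𝓕.filter fun F => F ⊆ G).card : ℝ) ≤ ∑ i ∈ G, x i) :
    ∀ n (w : Fin r → ℝ), (Finset.univ.filter fun i => 0 < w i).card = n →
      (∀ i, 0 ≤ w i) → ∑ i, w i * x i ≤ ∑ F ∈ 𝓕, mxAux w F := by
  intro n
  induction n using Nat.strong_induction_on with
  | _ n ih =>
    intro w hcard hw
    by_cases hA : (Finset.univ.filter fun i => 0 < w i) = ∅
    · -- w = 0
      have hw0 : ∀ i, w i = 0 := by
        intro i
        by_contra hi
        have : i ∈ Finset.univ.filter fun i => 0 < w i := by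
          simp [lt_of_le_of_ne (hw i) (Ne.symm hi)]
        simp [hA] at this
      have hL : ∑ i, w i * x i = 0 := by
        apply Finset.sum_eq_zero; intro i _; rw [hw0 i, zero_mul]
      have hR : ∀ F ∈ 𝓕, mxAux w F = 0 := by
        intro F hF
        have hFne : F.Nonempty := Finset.nonempty_of_ne_empty (h F hF)
        rw [mxAux_of_nonempty hFne]
        have : w = fun _ => (0 : ℝ) := funext hw0
        rw [this, Finset.sup'_const]
      rw [hL, Finset.sum_congr rfl hR, Finset.sum_const, smul_zero]
    · set A := Finset.univ.filter fun i => 0 < w i with hAdef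
      have hAne : A.Nonempty := Finset.nonempty_of_ne_empty hA
      have hmemA : ∀ i, i ∈ A ↔ 0 < w i := by intro i; simp [hAdef]
      set m := A.inf' hAne w with hmdef
      have hm : 0 < m := (Finset.lt_inf'_iff hAne).mpr fun i hi => (hmemA i).1 hi
      have hwA : ∀ i ∉ A, w i = 0 := fun i hi =>
        le_antisymm (by simpa [hmemA i] using hi) (hw i)
      set w' := fun i => w i - (if i ∈ A then m else 0) with hw'def
      have hw' : ∀ i, 0 ≤ w' i := by
        intro i; simp only [hw'def]
        by_cases hi : i ∈ A
        · simp only [if_pos hi]; linarith [Finset.inf'_le w hi]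
        · simp only [if_neg hi, sub_zero]; exact hw i
      have hsubset : (Finset.univ.filter fun i => 0 < w' i) ⊆ A := by
        intro i hi
        simp only [Finset.mem_filter] at hi
        by_contra hiA
        have : w' i = 0 := by simp [hw'def, if_neg hiA, hwA i hiA]
        rw [this] at hi; exact lt_irrefl 0 hi.2
      obtain ⟨i₀, hi₀A, hi₀⟩ := Finset.exists_mem_eq_inf' hAne w
      have hi₀' : i₀ ∉ (Finset.univ.filter fun i => 0 < w' i) := by
        simp [hw'def, if_pos hi₀A, ← hi₀]
        exact ⟨i₀, hi₀A, le_of_eq (by rw [hmdef, hi₀])⟩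
      have hlt : (Finset.univ.filter fun i => 0 < w' i).card < n := by
        rw [← hcard]
        exact Finset.card_lt_card ⟨hsubset, fun hsup => hi₀' (hsup hi₀A)⟩
      have IH := ih _ hlt w' rfl hw'
      -- decomposition of the sum
      have hdec : ∑ i, w i * x i = ∑ i, w' i * x i + m * ∑ i ∈ A, x i := by
        have h1 : ∀ i ∈ Finset.univ, w i * x i
            = w' i * x i + (if i ∈ A then m * x i else 0) := by
          intro i _
          by_cases hi : i ∈ A <;> simp only [hw'def, if_pos, if_neg, hi,
            if_true, if_false] <;> ring
        rw [Finset.sum_congr rfl h1, Finset.sum_add_distrib,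
          Fintype.sum_ite_mem A (fun i => m * x i), ← Finset.mul_sum]
      -- bound on the A-sum
      set P : Finset (Fin r) → Prop := fun F => ¬ F ⊆ Aᶜ with hPdef
      have hcardP : ((𝓕.filter fun F => F ⊆ Aᶜ).card : ℝ)
          + ((𝓕.filter P).card : ℝ) = (𝓕.card : ℝ) := by
        rw [← Nat.cast_add]
        norm_cast
        exact Finset.card_filter_add_card_filter_not _
      have hAb : ∑ i ∈ A, x i ≤ ((𝓕.filter P).card : ℝ) := by
        have h1 : ∑ i ∈ Aᶜ, x i + ∑ i ∈ A, x i = ∑ i, x i :=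
          Finset.sum_compl_add_sum A x
        have h2 := hxG Aᶜ
        rw [hxs] at h1
        linarith
      -- per-F inequality
      have hperF : ∀ F ∈ 𝓕, mxAux w' F + (if P F then m else 0) ≤ mxAux w F := by
        intro F hF
        have hFne : F.Nonempty := Finset.nonempty_of_ne_empty (h F hF)
        rw [mxAux_of_nonempty hFne, mxAux_of_nonempty hFne]
        by_cases hPF : P F
        · rw [if_pos hPF]
          obtain ⟨j, hjF, hjA⟩ := (Finset.not_subset).1 hPF
          have hjA' : j ∈ A := by simpa using hjA
          have hmw : m ≤ F.sup' hFne w :=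
            le_trans (Finset.inf'_le w hjA') (Finset.le_sup' w hjF)
          have hle : F.sup' hFne w' ≤ F.sup' hFne w - m := by
            apply Finset.sup'_le
            intro i hi
            by_cases hiA : i ∈ A
            · simp only [hw'def, if_pos hiA]
              have := Finset.le_sup' w hi
              linarith
            · simp only [hw'def, if_neg hiA, sub_zero, hwA i hiA]
              linarith
          linarith
        · rw [if_neg hPF]
          have hFA : F ⊆ Aᶜ := not_not.mp hPF
          have : ∀ i ∈ F, w' i = w i := by
            intro i hi
            have hiA : i ∉ A := by simpa using hFA hi
            simp [hw'def, if_neg hiA]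
          rw [add_zero, Finset.sup'_congr hFne rfl this]
      -- combine
      have hsumP : ∑ F ∈ 𝓕, (if P F then m else 0) = ((𝓕.filter P).card : ℝ) * m := by
        rw [← Finset.sum_filter, Finset.sum_const, nsmul_eq_mul]
      calc ∑ i, w i * x i = ∑ i, w' i * x i + m * ∑ i ∈ A, x i := hdec
        _ ≤ ∑ F ∈ 𝓕, mxAux w' F + m * ((𝓕.filter P).card : ℝ) := by
            have := mul_le_mul_of_nonneg_left hAb hm.le
            linarith
        _ = ∑ F ∈ 𝓕, (mxAux w' F + (if P F then m else 0)) := by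
            rw [Finset.sum_add_distrib, hsumP]; ring
        _ ≤ ∑ F ∈ 𝓕, mxAux w F := Finset.sum_le_sum hperF

lemma key_ineq (𝓕 : Finset (Finset (Fin r))) (h𝓕 : 𝓕.Nonempty)
    (h : ∀ F ∈ 𝓕, F ≠ ∅)
    (x : Fin r → ℝ) (hxs : ∑ i, x i = (𝓕.card : ℝ))
    (hxG : ∀ G : Finset (Fin r),
      ((𝓕.filter fun F => F ⊆ G).card : ℝ) ≤ ∑ i ∈ G, x i)
    (w : Fin r → ℝ) : ∑ i, w i * x i ≤ ∑ F ∈ 𝓕, mxAux w F := by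
  obtain ⟨F₀, hF₀⟩ := h𝓕
  obtain ⟨i₀, _⟩ := Finset.nonempty_of_ne_empty (h F₀ hF₀)
  have huniv : (Finset.univ : Finset (Fin r)).Nonempty := ⟨i₀, Finset.mem_univ i₀⟩
  set c := Finset.univ.inf' huniv w with hcdef
  set w₀ := fun i => w i - c with hw₀def
  have hw₀ : ∀ i, 0 ≤ w₀ i := by
    intro i
    simp only [hw₀def, sub_nonneg]
    exact Finset.inf'_le w (Finset.mem_univ i)
  classical
  have hkey := key_nonneg 𝓕 h x hxs hxG _ w₀ rfl hw₀
  have hL : ∑ i, w i * x i = ∑ i, w₀ i * x i + c * (𝓕.card : ℝ) := by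
    rw [← hxs, Finset.mul_sum, ← Finset.sum_add_distrib]
    refine Finset.sum_congr rfl fun i _ => ?_
    simp only [hw₀def]; ring
  have hR : ∀ F ∈ 𝓕, mxAux w F = mxAux w₀ F + c := by
    intro F hF
    have hFne : F.Nonempty := Finset.nonempty_of_ne_empty (h F hF)
    rw [mxAux_of_nonempty hFne, mxAux_of_nonempty hFne]
    apply le_antisymm
    · apply Finset.sup'_le
      intro i hi
      have : w i - c ≤ F.sup' hFne w₀ := Finset.le_sup' w₀ hi
      linarith
    · have : F.sup' hFne w₀ ≤ F.sup' hFne w - c := by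
        apply Finset.sup'_le
        intro i hi
        have := Finset.le_sup' w hi
        simp only [hw₀def]
        linarith
      linarith
  rw [hL, Finset.sum_congr rfl hR, Finset.sum_add_distrib, Finset.sum_const,
    nsmul_eq_mul]
  linarith

lemma minkSum_convex_isCompact (𝓕 : Finset (Finset (Fin r))) :
    Convex ℝ (minkSum 𝓕) ∧ IsCompact (minkSum 𝓕) := by
  unfold minkSum
  induction 𝓕 using Finset.cons_induction with
  | empty =>
      rw [Finset.sum_empty]
      exact ⟨convex_singleton 0, isCompact_singleton⟩
  | cons F s hFs ihs =>
      rw [Finset.sum_cons]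
      refine ⟨(convex_convexHull ℝ _).add ihs.1, ?_⟩
      exact IsCompact.add (((F.finite_toSet).image _).isCompact_convexHull (𝕜 := ℝ)) ihs.2

end Statement9Aux

/-- Inequality description of the Minkowski sum `Δ_𝓕`: it consists of
the nonnegative vectors with coordinate sum `|𝓕|` such that for every `G ⊆ [r]`,
`∑_{i ∈ G} x_i ≥ #{F ∈ 𝓕 : F ⊆ G}`. -/
theorem statement9 {r : ℕ} (𝓕 : Finset (Finset (Fin r))) (h𝓕 : 𝓕.Nonempty)
    (h : ∀ F ∈ 𝓕, F ≠ ∅) :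
    minkSum 𝓕 = {x : Fin r → ℝ | (∀ i, 0 ≤ x i) ∧ (∑ i, x i) = (𝓕.card : ℝ) ∧
      ∀ G : Finset (Fin r),
        ((𝓕.filter fun F => F ⊆ G).card : ℝ) ≤ ∑ i ∈ G, x i} := by
  ext x
  constructor
  · -- forward direction
    intro hx
    rw [minkSum, Set.mem_finset_sum] at hx
    obtain ⟨y, hy, hsum⟩ := hx
    have hprops : ∀ F ∈ 𝓕, (∀ i, 0 ≤ y F i) ∧ (∀ i ∉ F, y F i = 0) ∧
        ∑ i ∈ F, y F i = 1 := fun F hF => faceSimplex_mem_props (hy hF)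
    have hxeq : ∀ i, x i = ∑ F ∈ 𝓕, y F i := by
      intro i; rw [← hsum, Finset.sum_apply]
    have hsumF : ∀ F ∈ 𝓕, ∀ G : Finset (Fin r), F ⊆ G → ∑ i ∈ G, y F i = 1 := by
      intro F hF G hFG
      rw [← (hprops F hF).2.2]
      exact (Finset.sum_subset hFG fun i _ hiF => (hprops F hF).2.1 i hiF).symm
    refine ⟨fun i => ?_, ?_, fun G => ?_⟩
    · rw [hxeq i]
      exact Finset.sum_nonneg fun F hF => (hprops F hF).1 i
    · calc ∑ i, x i = ∑ i, ∑ F ∈ 𝓕, y F i := by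
            exact Finset.sum_congr rfl fun i _ => hxeq i
        _ = ∑ F ∈ 𝓕, ∑ i, y F i := Finset.sum_comm
        _ = ∑ F ∈ 𝓕, (1 : ℝ) := by
            refine Finset.sum_congr rfl fun F hF => ?_
            exact hsumF F hF Finset.univ (Finset.subset_univ F)
        _ = (𝓕.card : ℝ) := by rw [Finset.sum_const, nsmul_eq_mul, mul_one]
    · have h1 : ∑ i ∈ G, x i = ∑ F ∈ 𝓕, ∑ i ∈ G, y F i := by
        rw [Finset.sum_comm]
        exact Finset.sum_congr rfl fun i _ => hxeq i
      have h2 : ∑ F ∈ 𝓕.filter (fun F => F ⊆ G), ∑ i ∈ G, y F i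
          ≤ ∑ F ∈ 𝓕, ∑ i ∈ G, y F i := by
        apply Finset.sum_le_sum_of_subset_of_nonneg (Finset.filter_subset _ _)
        intro F hF _
        exact Finset.sum_nonneg fun i _ => (hprops F hF).1 i
      have h3 : ∑ F ∈ 𝓕.filter (fun F => F ⊆ G), ∑ i ∈ G, y F i
          = ((𝓕.filter fun F => F ⊆ G).card : ℝ) := by
        rw [Finset.sum_congr rfl (fun F hF => ?_), Finset.sum_const,
          nsmul_eq_mul, mul_one]
        rw [Finset.mem_filter] at hF
        exact hsumF F hF.1 G hF.2
      rw [h1]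
      rw [h3] at h2
      exact h2
  · -- backward direction
    rintro ⟨hx0, hxs, hxG⟩
    by_contra hx
    obtain ⟨hconv, hcomp⟩ := minkSum_convex_isCompact 𝓕
    obtain ⟨f, u, hfu, hux⟩ :=
      geometric_hahn_banach_closed_point hconv hcomp.isClosed hx
    set w : Fin r → ℝ := fun i => f (Pi.single i 1) with hwdef
    have hxrep : x = ∑ i, x i • (Pi.single i 1 : Fin r → ℝ) := by
      funext j
      rw [Finset.sum_apply]
      simp only [Pi.smul_apply, smul_eq_mul, Pi.single_apply, mul_ite, mul_one, mul_zero]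
      rw [Finset.sum_ite_eq Finset.univ j x, if_pos (Finset.mem_univ j)]
    have hfx : f x = ∑ i, w i * x i := by
      conv_lhs => rw [hxrep]
      rw [map_sum]
      refine Finset.sum_congr rfl fun i _ => ?_
      rw [f.map_smul, smul_eq_mul, hwdef, mul_comm]
    -- pick maximizers
    have hch : ∀ F ∈ 𝓕, ∃ j : Fin r, j ∈ F ∧ w j = mxAux w F := by
      intro F hF
      have hFne : F.Nonempty := Finset.nonempty_of_ne_empty (h F hF)
      obtain ⟨j, hjF, hj⟩ := Finset.exists_mem_eq_sup' hFne w
      exact ⟨j, hjF, by rw [mxAux_of_nonempty hFne, hj]⟩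
    have : Nonempty (Fin r) := by
      obtain ⟨F₀, hF₀⟩ := h𝓕
      obtain ⟨i₀, _⟩ := Finset.nonempty_of_ne_empty (h F₀ hF₀)
      exact ⟨i₀⟩
    choose! j hj1 hj2 using hch
    set p := ∑ F ∈ 𝓕, (Pi.single (j F) 1 : Fin r → ℝ) with hpdef
    have hp : p ∈ minkSum 𝓕 := by
      rw [minkSum]
      exact Set.finset_sum_mem_finset_sum 𝓕 _ _
        fun F hF => subset_convexHull ℝ _ ⟨j F, hj1 F hF, rfl⟩
    have hfp : f p = ∑ F ∈ 𝓕, mxAux w F := by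
      rw [hpdef, map_sum]
      exact Finset.sum_congr rfl fun F hF => hj2 F hF
    have hkey := key_ineq 𝓕 h𝓕 h x hxs hxG w
    have hfpu := hfu p hp
    rw [hfp] at hfpu
    rw [hfx] at hux
    linarith
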